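/- arXiv:math/0310439 — 3 statements merged into one kernel-verified Lean document; each statement's English description precedes it below -/
import Mathlib

section
/- At every point z of S³, the differential of the Hopf map h : S³ → S² (with respect to the standard smooth manifold structures on the spheres) is surjective onto the tangent space of S² at h(z); that is, h is a submersion. -/
open Metric Module
open scoped Manifold

noncomputable section

/-- `ℂ²` with the Euclidean (L²) norm: a 4-dimensional real inner product space. -/
abbrev SpaceC2 : Type := WithLp 2 (ℂ × ℂ)

/-- `ℂ × ℝ` with the Euclidean (L²) norm: a 3-dimensional real inner product space. -/
abbrev SpaceCR : Type := WithLp 2 (ℂ × ℝ)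

instance : Fact (finrank ℝ SpaceC2 = 3 + 1) :=
  ⟨by
    rw [(WithLp.linearEquiv 2 ℝ (ℂ × ℂ)).finrank_eq, Module.finrank_prod,
      Complex.finrank_real_complex]⟩

instance : Fact (finrank ℝ SpaceCR = 2 + 1) :=
  ⟨by
    rw [(WithLp.linearEquiv 2 ℝ (ℂ × ℝ)).finrank_eq, Module.finrank_prod,
      Complex.finrank_real_complex, Module.finrank_self]⟩

/-- The Hopf map `(z₁, z₂) ↦ (2 z₁ conj z₂, |z₁|² - |z₂|²)` from `ℂ²` to `ℂ × ℝ`. -/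
def hopf (z : SpaceC2) : SpaceCR :=
  (WithLp.equiv 2 (ℂ × ℝ)).symm
    (2 * z.fst * (starRingEnd ℂ) z.snd, ‖z.fst‖ ^ 2 - ‖z.snd‖ ^ 2)

theorem hopf_mem_sphere (z : SpaceC2) (hz : z ∈ sphere (0 : SpaceC2) 1) :
    hopf z ∈ sphere (0 : SpaceCR) 1 := by
  rw [mem_sphere_zero_iff_norm] at hz ⊢
  have hz2 : ‖z.fst‖ ^ 2 + ‖z.snd‖ ^ 2 = 1 := by
    have := WithLp.prod_norm_sq_eq_of_L2 z
    rw [hz] at this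
    simpa using this.symm
  have h2 : ‖hopf z‖ ^ 2 = ‖2 * z.fst * (starRingEnd ℂ) z.snd‖ ^ 2
      + ‖‖z.fst‖ ^ 2 - ‖z.snd‖ ^ 2‖ ^ 2 :=
    WithLp.prod_norm_sq_eq_of_L2 _
  have ha : ‖2 * z.fst * (starRingEnd ℂ) z.snd‖ = 2 * (‖z.fst‖ * ‖z.snd‖) := by
    simp [norm_mul]; ring
  have hb : ‖‖z.fst‖ ^ 2 - ‖z.snd‖ ^ 2‖ ^ 2
      = (‖z.fst‖ ^ 2 - ‖z.snd‖ ^ 2) ^ 2 := by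
    rw [Real.norm_eq_abs, sq_abs]
  have hsq : ‖hopf z‖ ^ 2 = 1 := by
    rw [h2, ha, hb]
    linear_combination (‖z.fst‖ ^ 2 + ‖z.snd‖ ^ 2 + 1) * hz2
  have h0 : 0 ≤ ‖hopf z‖ := norm_nonneg _
  nlinarith [hsq, h0]

/-- The Hopf map, as a map from the unit sphere `S³ ⊂ ℂ²` to the unit sphere
`S² ⊂ ℂ × ℝ`. -/
def hopfSphere (z : sphere (0 : SpaceC2) 1) : sphere (0 : SpaceCR) 1 :=
  ⟨hopf z, hopf_mem_sphere z z.2⟩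


section Aux
open scoped ComplexConjugate

def gHopf (p : ℂ × ℂ) : ℂ × ℝ :=
  (2 * p.1 * (starRingEnd ℂ) p.2, ‖p.1‖ ^ 2 - ‖p.2‖ ^ 2)

lemma gHopf_eq : gHopf = fun p : ℂ × ℂ =>
    ((2 * p.1 * conj p.2,
      p.1.re * p.1.re + p.1.im * p.1.im - (p.2.re * p.2.re + p.2.im * p.2.im)) : ℂ × ℝ) := by
  funext p
  simp only [gHopf, Complex.sq_norm, Complex.normSq_apply]

def dgHopf (p : ℂ × ℂ) : (ℂ × ℂ) →L[ℝ] ℂ × ℝ :=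
  ((2 * p.1) • (Complex.conjCLE.toContinuousLinearMap).comp (ContinuousLinearMap.snd ℝ ℂ ℂ) +
      (starRingEnd ℂ) p.2 • (2 : ℂ) • ContinuousLinearMap.fst ℝ ℂ ℂ).prod
    (p.1.re • Complex.reCLM.comp (ContinuousLinearMap.fst ℝ ℂ ℂ) +
          p.1.re • Complex.reCLM.comp (ContinuousLinearMap.fst ℝ ℂ ℂ) +
        (p.1.im • Complex.imCLM.comp (ContinuousLinearMap.fst ℝ ℂ ℂ) +
          p.1.im • Complex.imCLM.comp (ContinuousLinearMap.fst ℝ ℂ ℂ)) -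
      (p.2.re • Complex.reCLM.comp (ContinuousLinearMap.snd ℝ ℂ ℂ) +
          p.2.re • Complex.reCLM.comp (ContinuousLinearMap.snd ℝ ℂ ℂ) +
        (p.2.im • Complex.imCLM.comp (ContinuousLinearMap.snd ℝ ℂ ℂ) +
          p.2.im • Complex.imCLM.comp (ContinuousLinearMap.snd ℝ ℂ ℂ))))

lemma dgHopf_apply (p v : ℂ × ℂ) :
    dgHopf p v = (2 * v.1 * conj p.2 + 2 * p.1 * conj v.2,
      2 * (p.1.re * v.1.re + p.1.im * v.1.im) - 2 * (p.2.re * v.2.re + p.2.im * v.2.im)) := by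
  simp [dgHopf]
  constructor <;> ring

lemma hasFDerivAt_gHopf (p : ℂ × ℂ) : HasFDerivAt gHopf (dgHopf p) p := by
  rw [gHopf_eq]
  have hconj : HasFDerivAt (fun q : ℂ × ℂ => conj q.2)
      (Complex.conjCLE.toContinuousLinearMap.comp (ContinuousLinearMap.snd ℝ ℂ ℂ)) p :=
    (Complex.conjCLE.toContinuousLinearMap.comp (ContinuousLinearMap.snd ℝ ℂ ℂ)).hasFDerivAt
  have h1 : HasFDerivAt (fun q : ℂ × ℂ => 2 * q.1) ((2 : ℂ) • ContinuousLinearMap.fst ℝ ℂ ℂ) p :=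
    (hasFDerivAt_fst (p := p)).const_mul 2
  have hre1 : HasFDerivAt (fun q : ℂ × ℂ => q.1.re) (Complex.reCLM.comp (ContinuousLinearMap.fst ℝ ℂ ℂ)) p :=
    (Complex.reCLM.comp (ContinuousLinearMap.fst ℝ ℂ ℂ)).hasFDerivAt
  have him1 : HasFDerivAt (fun q : ℂ × ℂ => q.1.im) (Complex.imCLM.comp (ContinuousLinearMap.fst ℝ ℂ ℂ)) p :=
    (Complex.imCLM.comp (ContinuousLinearMap.fst ℝ ℂ ℂ)).hasFDerivAt
  have hre2 : HasFDerivAt (fun q : ℂ × ℂ => q.2.re) (Complex.reCLM.comp (ContinuousLinearMap.snd ℝ ℂ ℂ)) p :=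
    (Complex.reCLM.comp (ContinuousLinearMap.snd ℝ ℂ ℂ)).hasFDerivAt
  have him2 : HasFDerivAt (fun q : ℂ × ℂ => q.2.im) (Complex.imCLM.comp (ContinuousLinearMap.snd ℝ ℂ ℂ)) p :=
    (Complex.imCLM.comp (ContinuousLinearMap.snd ℝ ℂ ℂ)).hasFDerivAt
  exact (h1.mul hconj).prodMk
    (((hre1.mul hre1).add (him1.mul him1)).sub ((hre2.mul hre2).add (him2.mul him2)))

lemma contDiff_gHopf : ContDiff ℝ ⊤ gHopf := by
  rw [gHopf_eq]
  apply ContDiff.prodMk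
  · exact ((contDiff_const.mul contDiff_fst).mul
      (Complex.conjCLE.toContinuousLinearMap.contDiff.comp contDiff_snd))
  · apply ContDiff.sub <;>
    · apply ContDiff.add <;>
      · apply ContDiff.mul <;>
        first
        | exact Complex.reCLM.contDiff.comp contDiff_fst
        | exact Complex.imCLM.contDiff.comp contDiff_fst
        | exact Complex.reCLM.contDiff.comp contDiff_snd
        | exact Complex.imCLM.contDiff.comp contDiff_snd

abbrev eC2 : SpaceC2 ≃L[ℝ] ℂ × ℂ := WithLp.prodContinuousLinearEquiv 2 ℝ ℂ ℂ
abbrev eCR : SpaceCR ≃L[ℝ] ℂ × ℝ := WithLp.prodContinuousLinearEquiv 2 ℝ ℂ ℝ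

lemma hopf_eq_comp : hopf = ⇑eCR.symm ∘ gHopf ∘ ⇑eC2 := rfl

def dHopf (z : SpaceC2) : SpaceC2 →L[ℝ] SpaceCR :=
  (eCR.symm.toContinuousLinearMap.comp (dgHopf (eC2 z))).comp eC2.toContinuousLinearMap

lemma hasFDerivAt_hopf (z : SpaceC2) : HasFDerivAt hopf (dHopf z) z := by
  rw [hopf_eq_comp]
  exact eCR.symm.hasFDerivAt.comp _ ((hasFDerivAt_gHopf (eC2 z)).comp _ eC2.hasFDerivAt)

lemma dHopf_apply (z v : SpaceC2) :
    dHopf z v = (WithLp.equiv 2 (ℂ × ℝ)).symm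
      (2 * v.fst * conj z.snd + 2 * z.fst * conj v.snd,
        2 * (z.fst.re * v.fst.re + z.fst.im * v.fst.im) - 2 * (z.snd.re * v.snd.re + z.snd.im * v.snd.im)) := by
  simp only [dHopf, ContinuousLinearMap.coe_comp', Function.comp_apply,
    ContinuousLinearEquiv.coe_coe]
  rw [dgHopf_apply]
  rfl

lemma contDiff_hopf : ContDiff ℝ ⊤ hopf := by
  rw [hopf_eq_comp]
  exact eCR.symm.contDiff.comp (contDiff_gHopf.comp eC2.contDiff)

lemma contMDiff_hopfSphere : ContMDiff (𝓡 3) (𝓡 2) ⊤ hopfSphere := by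
  have h : ContMDiff 𝓘(ℝ, SpaceC2) 𝓘(ℝ, SpaceCR) ⊤ hopf := contMDiff_iff_contDiff.mpr (contDiff_hopf.of_le le_top)
  exact (h.comp contMDiff_coe_sphere).codRestrict_sphere (fun z => hopf_mem_sphere z z.2)

end Aux

open scoped ComplexConjugate RealInnerProductSpace in
/-- At every point of `S³`, the differential of the Hopf map `h : S³ → S²` is surjective
onto the tangent space of `S²` at the image point; that is, `h` is a submersion. -/
theorem hopfSphere_isSubmersion :
    ∀ z : sphere (0 : SpaceC2) 1,
      Function.Surjective (mfderiv (𝓡 3) (𝓡 2) hopfSphere z) := by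
  intro z u'
  have hmd2 : MDifferentiableAt (𝓡 2) 𝓘(ℝ, SpaceCR)
      (Subtype.val : sphere (0 : SpaceCR) 1 → SpaceCR) (hopfSphere z) :=
    (contMDiff_coe_sphere (m := 1) (hopfSphere z)).mdifferentiableAt one_ne_zero
  have hmd3 : MDifferentiableAt (𝓡 3) 𝓘(ℝ, SpaceC2)
      (Subtype.val : sphere (0 : SpaceC2) 1 → SpaceC2) z :=
    (contMDiff_coe_sphere (m := 1) z).mdifferentiableAt one_ne_zero
  have hmdh : MDifferentiableAt (𝓡 3) (𝓡 2) hopfSphere z :=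
    (contMDiff_hopfSphere z).mdifferentiableAt (by simp)
  have hmdhopf : MDifferentiableAt 𝓘(ℝ, SpaceC2) 𝓘(ℝ, SpaceCR) hopf ((z : SpaceC2)) :=
    (hasFDerivAt_hopf ((z : SpaceC2))).differentiableAt.mdifferentiableAt
  have key : (mfderiv (𝓡 2) 𝓘(ℝ, SpaceCR) Subtype.val (hopfSphere z)).comp
      (mfderiv (𝓡 3) (𝓡 2) hopfSphere z)
      = (dHopf (z : SpaceC2)).comp
        (mfderiv (𝓡 3) 𝓘(ℝ, SpaceC2) Subtype.val z) := by
    rw [← mfderiv_comp z hmd2 hmdh]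
    have h1 : (Subtype.val : sphere (0 : SpaceCR) 1 → SpaceCR) ∘ hopfSphere
        = hopf ∘ (Subtype.val : sphere (0 : SpaceC2) 1 → SpaceC2) := rfl
    rw [h1, mfderiv_comp z hmdhopf hmd3, mfderiv_eq_fderiv,
      (hasFDerivAt_hopf ((z : SpaceC2))).fderiv]
    rfl
  -- the target vector in the ambient space
  set u : SpaceCR := mfderiv (𝓡 2) 𝓘(ℝ, SpaceCR) Subtype.val (hopfSphere z) u' with hu_def
  have hu : u ∈ (ℝ ∙ ((hopfSphere z : SpaceCR)))ᗮ := by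
    rw [← range_mfderiv_coe_sphere (n := 2) (hopfSphere z)]
    exact ⟨u', rfl⟩
  have hinner : ⟪((hopfSphere z : SpaceCR)), u⟫ = 0 :=
    Submodule.mem_orthogonal_singleton_iff_inner_right.mp hu
  -- norm 1 condition in coordinates
  have hz : ‖(z : SpaceC2)‖ = 1 := mem_sphere_zero_iff_norm.mp z.2
  have hP : (z : SpaceC2).fst.re * (z : SpaceC2).fst.re + (z : SpaceC2).fst.im * (z : SpaceC2).fst.im
      + ((z : SpaceC2).snd.re * (z : SpaceC2).snd.re + (z : SpaceC2).snd.im * (z : SpaceC2).snd.im)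
      = 1 := by
    have h2 := WithLp.prod_norm_sq_eq_of_L2 (z : SpaceC2)
    rw [hz] at h2
    have := h2.symm
    rw [Complex.sq_norm, Complex.normSq_apply] at this
    simpa [Complex.sq_norm, Complex.normSq_apply] using this
  -- the inner-product condition in coordinates
  have hinner' : 2 * ((z : SpaceC2).fst.re * (z : SpaceC2).snd.re
        + (z : SpaceC2).fst.im * (z : SpaceC2).snd.im) * u.fst.re
      + 2 * ((z : SpaceC2).fst.im * (z : SpaceC2).snd.re
        - (z : SpaceC2).fst.re * (z : SpaceC2).snd.im) * u.fst.im
      + ((z : SpaceC2).fst.re * (z : SpaceC2).fst.re + (z : SpaceC2).fst.im * (z : SpaceC2).fst.im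
        - ((z : SpaceC2).snd.re * (z : SpaceC2).snd.re
          + (z : SpaceC2).snd.im * (z : SpaceC2).snd.im)) * u.snd = 0 := by
    have h3 : ((hopfSphere z : SpaceCR)) = hopf (z : SpaceC2) := rfl
    rw [h3] at hinner
    rw [WithLp.prod_inner_apply] at hinner
    simp only [hopf, WithLp.equiv_symm_apply, WithLp.ofLp_toLp, WithLp.ofLp_fst, WithLp.ofLp_snd, Complex.inner,
      RCLike.inner_apply, Complex.sq_norm, Complex.normSq_apply, Complex.mul_re,
      Complex.mul_im, Complex.conj_re, Complex.conj_im, Complex.ofReal_re,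
      Complex.ofReal_im, Complex.re_ofNat, Complex.im_ofNat, conj_trivial] at hinner
    linear_combination hinner
  -- the explicit preimage vector in the ambient space
  set w : SpaceC2 := (WithLp.equiv 2 (ℂ × ℂ)).symm
    (((u.snd / 2 : ℝ) : ℂ) * (z : SpaceC2).fst + ((2⁻¹ : ℝ) : ℂ) * u.fst * (z : SpaceC2).snd,
      ((2⁻¹ : ℝ) : ℂ) * conj u.fst * (z : SpaceC2).fst - ((u.snd / 2 : ℝ) : ℂ) * (z : SpaceC2).snd)
    with hw_def
  have hw1 : w.fst = ((u.snd / 2 : ℝ) : ℂ) * (z : SpaceC2).fst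
      + ((2⁻¹ : ℝ) : ℂ) * u.fst * (z : SpaceC2).snd := rfl
  have hw2 : w.snd = ((2⁻¹ : ℝ) : ℂ) * conj u.fst * (z : SpaceC2).fst
      - ((u.snd / 2 : ℝ) : ℂ) * (z : SpaceC2).snd := rfl
  -- `w` is orthogonal to `z`, hence tangent to the sphere
  have hworth : w ∈ (ℝ ∙ ((z : SpaceC2) : SpaceC2))ᗮ := by
    rw [Submodule.mem_orthogonal_singleton_iff_inner_right, WithLp.prod_inner_apply]
    simp only [WithLp.ofLp_fst, WithLp.ofLp_snd, hw1, hw2, Complex.inner, RCLike.inner_apply, Complex.mul_re, Complex.mul_im,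
      Complex.add_re, Complex.add_im, Complex.sub_re, Complex.sub_im, Complex.conj_re,
      Complex.conj_im, Complex.ofReal_re, Complex.ofReal_im, conj_trivial]
    linear_combination hinner' / 2
  -- the differential of `hopf` sends `w` to `u`
  have hDw : dHopf ((z : SpaceC2)) w = u := by
    rw [dHopf_apply, Equiv.symm_apply_eq]
    have hu12 : WithLp.equiv 2 (ℂ × ℝ) u = (u.fst, u.snd) := rfl
    rw [hu12]
    refine Prod.ext ?_ ?_
    · apply Complex.ext <;>
      · simp only [hw1, hw2, Complex.mul_re, Complex.mul_im, Complex.add_re, Complex.add_im,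
          Complex.sub_re, Complex.sub_im, Complex.conj_re, Complex.conj_im, Complex.ofReal_re,
          Complex.ofReal_im, Complex.re_ofNat, Complex.im_ofNat]
        first
        | linear_combination u.fst.re * hP
        | linear_combination u.fst.im * hP
    · simp only [hw1, hw2, Complex.mul_re, Complex.mul_im, Complex.add_re, Complex.add_im,
        Complex.sub_re, Complex.sub_im, Complex.conj_re, Complex.conj_im, Complex.ofReal_re,
        Complex.ofReal_im]
      linear_combination u.snd * hP
  -- `w` is in the range of the differential of the inclusion of `S³`
  obtain ⟨v, hv⟩ : w ∈ LinearMap.range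
      (ContinuousLinearMap.toLinearMap (mfderiv (𝓡 3) 𝓘(ℝ, SpaceC2) (Subtype.val : sphere (0 : SpaceC2) 1 → SpaceC2) z
        : TangentSpace (𝓡 3) z →L[ℝ] SpaceC2)) := by
    rw [range_mfderiv_coe_sphere (n := 3) z]
    exact hworth
  refine ⟨v, mfderiv_coe_sphere_injective (hopfSphere z) ?_⟩
  have kv := DFunLike.congr_fun key v
  simp only [ContinuousLinearMap.coe_comp', Function.comp_apply] at kv
  rw [kv]
  exact (congrArg (⇑(dHopf ((z : SpaceC2)))) hv).trans (hDw.trans hu_def)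
end
end

section
/- Two points (z₁, z₂) and (w₁, w₂) of S³ have the same image under the Hopf map if and only if there exists λ ∈ ℂ with |λ| = 1 such that (w₁, w₂) = (λ·z₁, λ·z₂). In other words, the fibers of the Hopf map are exactly the orbits of the circle action λ·(z₁, z₂) = (λ·z₁, λ·z₂) on S³. -/
lemma mul_conj_abs_sq (z : ℂ) : z * (starRingEnd ℂ) z = (‖z‖ : ℂ) ^ 2 := by
  rw [Complex.mul_conj, Complex.normSq_eq_norm_sq]
  push_cast
  ring

/-- Two points of `S³` have the same image under the Hopf map if and only if they lie in the
same orbit of the circle action `λ · (z₁, z₂) = (λ z₁, λ z₂)`. -/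
theorem hopf_fibers_are_circle_orbits (z₁ z₂ w₁ w₂ : ℂ)
    (hz : ‖z₁‖ ^ 2 + ‖z₂‖ ^ 2 = 1)
    (hw : ‖w₁‖ ^ 2 + ‖w₂‖ ^ 2 = 1) :
    (2 * z₁ * (starRingEnd ℂ) z₂, ‖z₁‖ ^ 2 - ‖z₂‖ ^ 2)
        = (2 * w₁ * (starRingEnd ℂ) w₂, ‖w₁‖ ^ 2 - ‖w₂‖ ^ 2)
      ↔ ∃ lam : ℂ, ‖lam‖ = 1 ∧ w₁ = lam * z₁ ∧ w₂ = lam * z₂ := by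
  constructor
  · rintro h
    rw [Prod.mk.injEq] at h
    obtain ⟨h1, h2⟩ := h
    have hprod : z₁ * (starRingEnd ℂ) z₂ = w₁ * (starRingEnd ℂ) w₂ := by
      linear_combination h1 / 2
    have ha1 : ‖z₁‖ = ‖w₁‖ := by
      have h3 : ‖z₁‖ ^ 2 = ‖w₁‖ ^ 2 := by linarith
      nlinarith [norm_nonneg z₁, norm_nonneg w₁]
    have ha2 : ‖z₂‖ = ‖w₂‖ := by
      have h3 : ‖z₂‖ ^ 2 = ‖w₂‖ ^ 2 := by linarith
      nlinarith [norm_nonneg z₂, norm_nonneg w₂]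
    by_cases hz1 : z₁ = 0
    · have hw1 : w₁ = 0 := by
        have : ‖w₁‖ = 0 := by rw [← ha1, hz1]; simp
        simpa using this
      have hz2ne : z₂ ≠ 0 := by
        intro h
        rw [hz1, h] at hz; simp at hz
      refine ⟨w₂ / z₂, ?_, ?_, ?_⟩
      · rw [norm_div, ← ha2, div_self]
        simpa using hz2ne
      · rw [hz1, hw1, mul_zero]
      · field_simp
    · have hw1ne : w₁ ≠ 0 := by
        intro h
        apply hz1
        have : ‖z₁‖ = 0 := by rw [ha1, h]; simp
        simpa using this
      refine ⟨w₁ / z₁, ?_, ?_, ?_⟩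
      · rw [norm_div, ← ha1, div_self]
        simpa using hz1
      · field_simp
      · have hc : (starRingEnd ℂ) z₁ * z₂ = (starRingEnd ℂ) w₁ * w₂ := by
          have := congrArg (starRingEnd ℂ) hprod
          simpa [map_mul, mul_comm] using this
        have hnorm : w₁ * (starRingEnd ℂ) w₁ = (‖z₁‖ : ℂ) ^ 2 := by
          rw [mul_conj_abs_sq, ha1]
        have key : w₁ * ((starRingEnd ℂ) z₁ * z₂) = (‖z₁‖ : ℂ) ^ 2 * w₂ := by
          rw [hc, ← mul_assoc, hnorm]
        have hnz : z₁ * (starRingEnd ℂ) z₁ = (‖z₁‖ : ℂ) ^ 2 :=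
          mul_conj_abs_sq z₁
        have habs : ((‖z₁‖ : ℂ)) ≠ 0 := by
          simpa using hz1
        field_simp
        have hthis : w₂ * (z₁ * (starRingEnd ℂ) z₁) = w₁ * (starRingEnd ℂ) z₁ * z₂ := by
          linear_combination -key + w₂ * hnz
        have hcz1 : (starRingEnd ℂ) z₁ ≠ 0 := by simpa using hz1
        have := mul_right_cancel₀ hcz1
          (by linear_combination hthis : w₂ * z₁ * (starRingEnd ℂ) z₁ = w₁ * z₂ * (starRingEnd ℂ) z₁)
        linear_combination this
  · rintro ⟨lam, hlam, rfl, rfl⟩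
    have hl : lam * (starRingEnd ℂ) lam = 1 := by
      rw [mul_conj_abs_sq, hlam]; norm_num
    rw [Prod.mk.injEq]
    constructor
    · simp only [map_mul]
      linear_combination (-2 : ℂ) * z₁ * (starRingEnd ℂ) z₂ * hl
    · simp [map_mul, hlam]
end

section
/- The Hopf map induces a homeomorphism from the orbit-space quotient of S³ by the circle action λ·(z₁, z₂) = (λ·z₁, λ·z₂) (with the quotient topology) onto S². -/
noncomputable section

/-- The unit sphere `S³ = {(z₁,z₂) ∈ ℂ² : |z₁|² + |z₂|² = 1}`, with the subspace
topology. -/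
abbrev SphereS3 : Type :=
  {p : ℂ × ℂ // ‖p.1‖ ^ 2 + ‖p.2‖ ^ 2 = 1}

/-- The unit sphere `S² = {(w,t) ∈ ℂ × ℝ : |w|² + t² = 1}`, with the subspace topology. -/
abbrev SphereS2 : Type :=
  {q : ℂ × ℝ // ‖q.1‖ ^ 2 + q.2 ^ 2 = 1}

/-- The relation on `S³` identifying points in the same orbit of the circle action
`λ · (z₁, z₂) = (λ z₁, λ z₂)`. -/
def circleRel (z w : SphereS3) : Prop :=
  ∃ lam : ℂ, ‖lam‖ = 1 ∧
    (w : ℂ × ℂ) = (lam * (z : ℂ × ℂ).1, lam * (z : ℂ × ℂ).2)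

local notation "conj'" => starRingEnd ℂ

lemma mul_conj'' (z : ℂ) : z * conj' z = (‖z‖ : ℂ)^2 := by
  rw [Complex.mul_conj, Complex.normSq_eq_norm_sq]; norm_cast

/-- The Hopf map -/
def hopfMap (z : SphereS3) : SphereS2 :=
  ⟨(2 * (z : ℂ × ℂ).1 * conj' (z : ℂ × ℂ).2,
    ‖(z : ℂ × ℂ).1‖ ^ 2 - ‖(z : ℂ × ℂ).2‖ ^ 2), by
    have h := z.2
    have h1 : ‖(2 * (z : ℂ × ℂ).1 * conj' (z : ℂ × ℂ).2)‖
        = 2 * ‖(z : ℂ × ℂ).1‖ * ‖(z : ℂ × ℂ).2‖ := by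
      simp [map_mul, Complex.norm_conj]
    rw [h1]
    linear_combination (‖(z : ℂ × ℂ).1‖ ^ 2 + ‖(z : ℂ × ℂ).2‖ ^ 2 + 1) * h⟩

lemma hopfMap_continuous : Continuous hopfMap := by
  apply Continuous.subtype_mk
  apply Continuous.prodMk
  · exact (continuous_const.mul (continuous_fst.comp continuous_subtype_val)).mul
      (Complex.continuous_conj.comp (continuous_snd.comp continuous_subtype_val))
  · exact ((continuous_norm.comp (continuous_fst.comp continuous_subtype_val)).pow 2).sub
      ((continuous_norm.comp (continuous_snd.comp continuous_subtype_val)).pow 2)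

lemma hopfMap_invariant : ∀ z w : SphereS3, circleRel z w → hopfMap z = hopfMap w := by
  rintro z w ⟨lam, hlam, hw⟩
  apply Subtype.ext
  simp only [hopfMap, hw, Prod.mk.injEq]
  have h2 : (‖lam‖ : ℝ)^2 = 1 := by rw [hlam]; norm_num
  constructor
  · simp only [map_mul]
    have : lam * conj' lam = 1 := by
      rw [mul_conj'', hlam]; norm_num
    linear_combination ((-2 : ℂ) * (z : ℂ × ℂ).1 * conj' (z : ℂ × ℂ).2) * this
  · simp only [norm_mul, hlam]
    ring

lemma hopf_surjective : Function.Surjective hopfMap := by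
  rintro ⟨⟨w, t⟩, hq⟩
  simp only at hq
  by_cases ht : t = -1
  · -- then w = 0
    have hw : w = 0 := by
      have : ‖w‖ ^ 2 = 0 := by rw [ht] at hq; nlinarith
      simpa using pow_eq_zero_iff (n := 2) (by norm_num) |>.mp this
    refine ⟨⟨(0, 1), by simp⟩, ?_⟩
    apply Subtype.ext
    simp [hopfMap, hw, ht]
  · -- t > -1
    have ht2 : t^2 ≤ 1 := by nlinarith [sq_nonneg (‖w‖)]
    have ht1 : -1 ≤ t := by nlinarith
    have htgt : -1 < t := lt_of_le_of_ne ht1 (fun h => ht h.symm)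
    set s : ℝ := Real.sqrt ((1 + t) / 2) with hs
    have hspos : 0 < s := Real.sqrt_pos.mpr (by linarith)
    have hssq : s ^ 2 = (1 + t) / 2 := Real.sq_sqrt (by linarith)
    have hsne : (s : ℂ) ≠ 0 := by exact_mod_cast hspos.ne'
    refine ⟨⟨((s : ℂ), conj' w / (2 * s)), ?_⟩, ?_⟩
    · simp only [map_div₀, map_mul, norm_div, norm_mul, Complex.norm_conj, Complex.norm_real, Real.norm_eq_abs,
        Complex.norm_two, abs_of_pos hspos]
      rw [div_pow]
      have h4 : (2 * s) ^ 2 = 2 * (1 + t) := by nlinarith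
      rw [h4]
      have habs : ‖w‖ ^ 2 = 1 - t^2 := by linarith
      have h1t : (1 : ℝ) + t ≠ 0 := by linarith
      have hdiv : (1 - t^2)/(2*(1+t)) = (1-t)/2 := by
        rw [show (1:ℝ) - t^2 = (1+t)*(1-t) by ring, show (2:ℝ)*(1+t) = (1+t)*2 by ring,
          mul_div_mul_left _ _ h1t]
      rw [habs, hssq, hdiv]
      ring
    · apply Subtype.ext
      simp only [hopfMap, Prod.mk.injEq]
      constructor
      · simp only [map_div₀, map_mul, Complex.conj_conj, Complex.conj_ofReal,
          map_ofNat]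
        field_simp
      · simp only [map_div₀, map_mul, norm_div, norm_mul, Complex.norm_conj, Complex.norm_real, Real.norm_eq_abs,
          Complex.norm_two, abs_of_pos hspos]
        rw [div_pow]
        have h4 : (2 * s) ^ 2 = 2 * (1 + t) := by nlinarith
        rw [h4]
        have habs : ‖w‖ ^ 2 = 1 - t^2 := by linarith
        have h1t : (1 : ℝ) + t ≠ 0 := by linarith
        have hdiv : (1 - t^2)/(2*(1+t)) = (1-t)/2 := by
          rw [show (1:ℝ) - t^2 = (1+t)*(1-t) by ring, show (2:ℝ)*(1+t) = (1+t)*2 by ring,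
            mul_div_mul_left _ _ h1t]
        rw [habs, hssq, hdiv]
        ring

lemma hopf_injective : ∀ z w : SphereS3, hopfMap z = hopfMap w → circleRel z w := by
  rintro ⟨⟨z1, z2⟩, hz⟩ ⟨⟨w1, w2⟩, hw⟩ h
  simp only at hz hw
  have h' := congrArg Subtype.val h
  simp only [hopfMap] at h'
  have h1 : 2 * z1 * conj' z2 = 2 * w1 * conj' w2 := congrArg Prod.fst h'
  have h2 : ‖z1‖ ^ 2 - ‖z2‖ ^ 2
      = ‖w1‖ ^ 2 - ‖w2‖ ^ 2 := congrArg Prod.snd h'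
  have ha1 : ‖z1‖ = ‖w1‖ := by
    have e : ‖z1‖ ^ 2 = ‖w1‖ ^ 2 := by linarith
    calc ‖z1‖ = Real.sqrt (‖z1‖ ^ 2) := by
          rw [Real.sqrt_sq (norm_nonneg _)]
      _ = Real.sqrt (‖w1‖ ^ 2) := by rw [e]
      _ = ‖w1‖ := Real.sqrt_sq (norm_nonneg _)
  have ha2 : ‖z2‖ = ‖w2‖ := by
    have e : ‖z2‖ ^ 2 = ‖w2‖ ^ 2 := by linarith
    calc ‖z2‖ = Real.sqrt (‖z2‖ ^ 2) := by
          rw [Real.sqrt_sq (norm_nonneg _)]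
      _ = Real.sqrt (‖w2‖ ^ 2) := by rw [e]
      _ = ‖w2‖ := Real.sqrt_sq (norm_nonneg _)
  have hconj : conj' z1 * z2 = conj' w1 * w2 := by
    have := congrArg (starRingEnd ℂ) h1
    simp only [map_mul, Complex.conj_conj, map_ofNat] at this
    linear_combination this / 2
  by_cases hz1 : z1 = 0
  · -- z1 = 0, w1 = 0
    have hw1 : w1 = 0 := by
      have : ‖w1‖ = 0 := by rw [← ha1, hz1]; simp
      simpa using this
    have hz2abs : ‖z2‖ ^ 2 = 1 := by rw [hz1] at hz; simpa using hz
    have hz2 : z2 ≠ 0 := by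
      intro h0; rw [h0] at hz2abs; simp at hz2abs
    refine ⟨w2 / z2, ?_, ?_⟩
    · rw [norm_div, ← ha2, div_self]
      intro h0; exact hz2 (by simpa using h0)
    · simp only [hz1, hw1, mul_zero, Prod.mk.injEq]
      exact ⟨trivial, (div_mul_cancel₀ w2 hz2).symm⟩
  · refine ⟨w1 / z1, ?_, ?_⟩
    · rw [norm_div, ← ha1, div_self]
      intro h0; exact hz1 (by simpa using h0)
    · have hw1ne : w1 ≠ 0 := by
        intro h0
        apply hz1
        have : ‖z1‖ = 0 := by rw [ha1, h0]; simp
        simpa using this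
      have hcw1ne : conj' w1 ≠ 0 := by
        simpa using hw1ne
      have key : z1 * conj' z1 = w1 * conj' w1 := by
        rw [mul_conj'', mul_conj'', ha1]
      simp only [Prod.mk.injEq]
      constructor
      · field_simp
      · rw [div_mul_eq_mul_div, eq_div_iff (by exact hz1)]
        apply mul_left_cancel₀ hcw1ne
        linear_combination (-z1) * hconj + z2 * key

instance : CompactSpace SphereS3 := by
  have : IsCompact {p : ℂ × ℂ | ‖p.1‖ ^ 2 + ‖p.2‖ ^ 2 = 1} := by
    apply Metric.isCompact_of_isClosed_isBounded
    · exact isClosed_eq (((continuous_norm.comp continuous_fst).pow 2).add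
        ((continuous_norm.comp continuous_snd).pow 2)) continuous_const
    · apply Bornology.IsBounded.subset (Metric.isBounded_closedBall (x := (0 : ℂ × ℂ)) (r := 1))
      rintro ⟨p1, p2⟩ hp
      simp only [Set.mem_setOf_eq] at hp
      simp only [Metric.mem_closedBall, dist_zero_right, Prod.norm_def]
      have h1 : ‖p1‖ ≤ 1 := by nlinarith [norm_nonneg p1, norm_nonneg p2]
      have h2 : ‖p2‖ ≤ 1 := by nlinarith [norm_nonneg p1, norm_nonneg p2]
      exact max_le h1 h2
  exact isCompact_iff_compactSpace.mp this

instance : CompactSpace (Quot circleRel) := by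
  constructor
  have : Set.range (Quot.mk circleRel) = Set.univ := Set.range_eq_univ.mpr Quot.exists_rep
  rw [← this]
  exact isCompact_range continuous_quot_mk

/-- The Hopf map induces a homeomorphism from the orbit-space quotient of `S³` by the
circle action (with the quotient topology) onto `S²`. -/
theorem hopf_induces_homeomorph_quotient :
    ∃ e : Quot circleRel ≃ₜ SphereS2,
      ∀ z : SphereS3, ((e (Quot.mk circleRel z) : SphereS2) : ℂ × ℝ) =
        (2 * (z : ℂ × ℂ).1 * (starRingEnd ℂ) (z : ℂ × ℂ).2,
          ‖(z : ℂ × ℂ).1‖ ^ 2 - ‖(z : ℂ × ℂ).2‖ ^ 2) := by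
  let f : Quot circleRel → SphereS2 := Quot.lift hopfMap hopfMap_invariant
  have hfc : Continuous f := continuous_quot_lift _ hopfMap_continuous
  have hbij : Function.Bijective f := by
    constructor
    · rintro ⟨z⟩ ⟨w⟩ h
      exact Quot.sound (hopf_injective z w h)
    · intro q
      obtain ⟨z, hz⟩ := hopf_surjective q
      exact ⟨Quot.mk _ z, hz⟩
  refine ⟨Continuous.homeoOfEquivCompactToT2 (f := Equiv.ofBijective f hbij) hfc, fun z => ?_⟩
  show ((hopfMap z : SphereS2) : ℂ × ℝ) = _
  rfl
end
end
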